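/- Suppose the passwords are partitioned into equivalence sets by a classification map cls : Fin n → Fin m such that any two passwords in the same equivalence set have the same prob900bability and the same hash cost (cls i = cls j implies p i = p j and k i = k j), the equivalence sets are indexed in nonincreasing bang-for-buck order (whenever c ≤ c', i ∈ cls⁻¹(c) and j ∈ cls⁻¹(c'), one has p i·k j ≥ p j·k i), and π₀ is any guessing order that enumerates the equivalence sets in index order (a ≤ b implies cls(π₀(a)) ≤ cls(π₀(b))). Then the greedy algorithm that checks equivalence sets set-by-set is optimal: the maximum of U(π, B) over all permutations π and budgets B ≤ n equals the maximum over t ≤ m of U(π₀, S_t), where S_t = Σ_{c < t} |cls⁻¹(c)|. -/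

import Mathlib

open Finset

/-- Success probability λ(π,B): sum of probabilities of the first B guesses. -/
noncomputable def lam (n : ℕ) (p : Fin n → ℝ) (π : Equiv.Perm (Fin n)) (B : ℕ) : ℝ :=
  ∑ t : Fin n, if t.val < B then p (π t) else 0

/-- Attacker utility U(π,B) = v·λ(π,B) − Σ_{t<B} k(π(t))·(1 − λ(π,t)). -/
noncomputable def U (n : ℕ) (p k : Fin n → ℝ) (v : ℝ) (π : Equiv.Perm (Fin n)) (B : ℕ) : ℝ :=
  v * lam n p π B - ∑ t : Fin n, if t.val < B then k (π t) * (1 - lam n p π t.val) else 0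

/-- List-based utility with prior success mass `lm`. -/
noncomputable def uL {α : Type*} (p k : α → ℝ) (v : ℝ) : ℝ → List α → ℝ
  | _, [] => 0
  | lm, i :: l => (v * p i - k i * (1 - lm)) + uL p k v (lm + p i) l

lemma uL_append {α : Type*} (p k : α → ℝ) (v : ℝ) (l₁ l₂ : List α) (lm : ℝ) :
    uL p k v lm (l₁ ++ l₂) = uL p k v lm l₁ + uL p k v (lm + (l₁.map p).sum) l₂ := by
  induction l₁ generalizing lm with
  | nil => simp [uL]
  | cons x xs ih =>
    simp only [List.cons_append, uL, List.append_eq, ih, List.map_cons, List.sum_cons]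
    rw [← add_assoc lm (p x) ((xs.map p).sum)]
    ring

lemma uL_swap {α : Type*} (p k : α → ℝ) (v : ℝ) (x y : α) (l : List α) (lm : ℝ) :
    uL p k v lm (y :: x :: l) = uL p k v lm (x :: y :: l) + (k x * p y - k y * p x) := by
  simp only [uL]
  rw [add_right_comm lm (p y) (p x)]
  ring

lemma uL_insert {α : Type*} (p k : α → ℝ) (v : ℝ) (w : α → ℕ)
    (H : ∀ x y : α, w x ≤ w y → p y * k x ≤ p x * k y)
    (l : List α) (hl : l.Pairwise (fun a b => w a ≤ w b)) :
    ∀ (x : α) (lm : ℝ), ∃ l', l'.Perm (x :: l) ∧ l'.Pairwise (fun a b => w a ≤ w b) ∧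
      uL p k v lm (x :: l) ≤ uL p k v lm l' := by
  induction l with
  | nil => intro x lm; exact ⟨[x], List.Perm.refl _, List.pairwise_singleton _ _, le_refl _⟩
  | cons y t ih =>
    intro x lm
    rcases le_or_gt (w x) (w y) with hxy | hyx
    · refine ⟨x :: y :: t, List.Perm.refl _, ?_, le_refl _⟩
      refine List.pairwise_cons.mpr ⟨?_, hl⟩
      intro b hb
      rcases List.mem_cons.mp hb with h | h
      · subst h; exact hxy
      · exact le_trans hxy ((List.pairwise_cons.mp hl).1 b h)
    · have hswap : uL p k v lm (x :: y :: t) ≤ uL p k v lm (y :: x :: t) := by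
        rw [uL_swap]
        have := H y x hyx.le
        nlinarith [this]
      obtain ⟨t', hperm, hsort, hle⟩ := ih (List.pairwise_cons.mp hl).2 x (lm + p y)
      refine ⟨y :: t', ?_, ?_, ?_⟩
      · exact (hperm.cons y).trans (List.Perm.swap x y t)
      · refine List.pairwise_cons.mpr ⟨?_, hsort⟩
        intro b hb
        rcases List.mem_cons.mp (hperm.mem_iff.mp hb) with h | h
        · subst h; exact hyx.le
        · exact (List.pairwise_cons.mp hl).1 b h
      · calc uL p k v lm (x :: y :: t) ≤ uL p k v lm (y :: x :: t) := hswap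
          _ = (v * p y - k y * (1 - lm)) + uL p k v (lm + p y) (x :: t) := rfl
          _ ≤ (v * p y - k y * (1 - lm)) + uL p k v (lm + p y) t' := by linarith
          _ = uL p k v lm (y :: t') := rfl

lemma uL_sort {α : Type*} (p k : α → ℝ) (v : ℝ) (w : α → ℕ)
    (H : ∀ x y : α, w x ≤ w y → p y * k x ≤ p x * k y)
    (l : List α) (lm : ℝ) :
    ∃ l', l'.Perm l ∧ l'.Pairwise (fun a b => w a ≤ w b) ∧
      uL p k v lm l ≤ uL p k v lm l' := by
  induction l generalizing lm with
  | nil => exact ⟨[], List.Perm.refl _, List.Pairwise.nil, le_refl _⟩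
  | cons x xs ih =>
    obtain ⟨xs', hperm, hsort, hle⟩ := ih (lm + p x)
    obtain ⟨l', hperm', hsort', hle'⟩ := uL_insert p k v w H xs' hsort x lm
    refine ⟨l', hperm'.trans (hperm.cons x), hsort', ?_⟩
    calc uL p k v lm (x :: xs) = (v * p x - k x * (1 - lm)) + uL p k v (lm + p x) xs := rfl
      _ ≤ (v * p x - k x * (1 - lm)) + uL p k v (lm + p x) xs' := by linarith
      _ = uL p k v lm (x :: xs') := rfl
      _ ≤ uL p k v lm l' := hle'

lemma sum_ite_succ (n B : ℕ) (hB : B < n) (f : Fin n → ℝ) :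
    (∑ t : Fin n, if t.val < B + 1 then f t else 0)
      = (∑ t : Fin n, if t.val < B then f t else 0) + f ⟨B, hB⟩ := by
  have h : ∀ t : Fin n, (if t.val < B + 1 then f t else 0)
      = (if t.val < B then f t else 0) + (if t = ⟨B, hB⟩ then f t else 0) := by
    intro t
    rcases lt_trichotomy t.val B with h1 | h1 | h1
    · rw [if_pos (by omega), if_pos h1, if_neg (by intro h2; subst h2; simp at h1)]
      ring
    · rw [if_pos (by omega), if_neg (by omega), if_pos (by exact Fin.ext h1)]
      ring
    · rw [if_neg (by omega), if_neg (by omega), if_neg (by intro h2; subst h2; simp at h1)]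
      ring
  rw [Finset.sum_congr rfl (fun t _ => h t), Finset.sum_add_distrib,
    Finset.sum_ite_eq' Finset.univ (⟨B, hB⟩ : Fin n) f, if_pos (Finset.mem_univ _)]

lemma lam_zero (n : ℕ) (p : Fin n → ℝ) (π : Equiv.Perm (Fin n)) : lam n p π 0 = 0 := by
  simp [lam]

lemma lam_succ (n : ℕ) (p : Fin n → ℝ) (π : Equiv.Perm (Fin n)) (B : ℕ) (hB : B < n) :
    lam n p π (B + 1) = lam n p π B + p (π ⟨B, hB⟩) :=
  sum_ite_succ n B hB _

lemma U_zero (n : ℕ) (p k : Fin n → ℝ) (v : ℝ) (π : Equiv.Perm (Fin n)) : U n p k v π 0 = 0 := by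
  simp [U, lam]

lemma U_succ (n : ℕ) (p k : Fin n → ℝ) (v : ℝ) (π : Equiv.Perm (Fin n)) (B : ℕ) (hB : B < n) :
    U n p k v π (B + 1) = U n p k v π B
      + (v * p (π ⟨B, hB⟩) - k (π ⟨B, hB⟩) * (1 - lam n p π B)) := by
  have h1 := sum_ite_succ n B hB (fun t => k (π t) * (1 - lam n p π t.val))
  have h2 := lam_succ n p π B hB
  simp only [U, h1, h2]
  ring

/-- the full guess list of a permutation -/
def plist (n : ℕ) (π : Equiv.Perm (Fin n)) : List (Fin n) := (List.finRange n).map π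

lemma plist_length (n : ℕ) (π : Equiv.Perm (Fin n)) : (plist n π).length = n := by
  simp [plist]

lemma plist_nodup (n : ℕ) (π : Equiv.Perm (Fin n)) : (plist n π).Nodup :=
  (List.nodup_finRange n).map π.injective

lemma plist_take_succ (n : ℕ) (π : Equiv.Perm (Fin n)) (B : ℕ) (hB : B < n) :
    (plist n π).take (B + 1) = (plist n π).take B ++ [π ⟨B, hB⟩] := by
  rw [List.take_succ]
  congr 1
  have hlen : B < (plist n π).length := by rwa [plist_length]
  rw [List.getElem?_eq_getElem hlen]
  simp [plist]

lemma lam_bridge (n : ℕ) (p : Fin n → ℝ) (π : Equiv.Perm (Fin n)) (B : ℕ) (hB : B ≤ n) :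
    lam n p π B = (((plist n π).take B).map p).sum := by
  induction B with
  | zero => simp [lam_zero]
  | succ B ih =>
    rw [lam_succ n p π B (by omega), plist_take_succ n π B (by omega), ih (by omega)]
    simp

lemma U_bridge (n : ℕ) (p k : Fin n → ℝ) (v : ℝ) (π : Equiv.Perm (Fin n)) (B : ℕ) (hB : B ≤ n) :
    U n p k v π B = uL p k v 0 ((plist n π).take B) := by
  induction B with
  | zero => simp [U_zero, uL]
  | succ B ih =>
    have hB' : B < n := by omega
    rw [U_succ n p k v π B hB', plist_take_succ n π B hB', uL_append, ih (by omega),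
      lam_bridge n p π B (by omega)]
    simp [uL]

lemma realize (n : ℕ) (l : List (Fin n)) (hl : l.Nodup) :
    ∃ π : Equiv.Perm (Fin n), (plist n π).take l.length = l := by
  classical
  set rest := (List.finRange n).filter (fun x => x ∉ l) with hrest
  set lfull := l ++ rest with hlfull
  have hndrest : rest.Nodup := (List.nodup_finRange n).filter _
  have hnd : lfull.Nodup := by
    rw [hlfull, List.nodup_append]
    refine ⟨hl, hndrest, ?_⟩
    intro x hx y hy hxy
    subst hxy
    have := List.of_mem_filter hy
    simp at this
    exact this hx
  have hsub1 : List.finRange n ⊆ lfull := by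
    intro x _
    by_cases hx : x ∈ l
    · exact List.mem_append_left _ hx
    · refine List.mem_append_right _ ?_
      rw [hrest]
      refine List.mem_filter.mpr ⟨List.mem_finRange x, by simpa using hx⟩
  have hsub2 : lfull ⊆ List.finRange n := fun x _ => List.mem_finRange x
  have hperm : lfull.Perm (List.finRange n) :=
    ((hnd.subperm hsub2).antisymm ((List.nodup_finRange n).subperm hsub1)).symm.symm
  have hlen : lfull.length = n := by
    rw [hperm.length_eq, List.length_finRange]
  have hinj : Function.Injective (fun a : Fin n => lfull.get (Fin.cast hlen.symm a)) := by
    intro a b hab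
    have := List.nodup_iff_injective_get.mp hnd hab
    simpa [Fin.ext_iff] using this
  let π : Equiv.Perm (Fin n) := Equiv.ofBijective _ ((Finite.injective_iff_bijective).mp hinj)
  refine ⟨π, ?_⟩
  have hmap : plist n π = lfull := by
    apply List.ext_getElem
    · simp [plist, hlen]
    · intro i h1 h2
      simp only [plist, List.getElem_map, List.getElem_finRange]
      rfl
  rw [hmap, hlfull, List.take_left]

lemma listsum_le_one (n : ℕ) (p : Fin n → ℝ) (hp : ∀ i, 0 ≤ p i) (hpsum : ∑ i, p i ≤ 1)
    (l : List (Fin n)) (hl : l.Nodup) : (l.map p).sum ≤ 1 := by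
  rw [← List.sum_toFinset _ hl]
  refine le_trans (Finset.sum_le_sum_of_subset_of_nonneg (Finset.subset_univ _)
    (fun i _ _ => hp i)) hpsum

lemma lowerset_iff (n : ℕ) (A : Finset (Fin n))
    (hdc : ∀ a b : Fin n, a ≤ b → b ∈ A → a ∈ A) (a : Fin n) :
    a ∈ A ↔ a.val < A.card := by
  constructor
  · intro ha
    have hsub : Finset.Iic a ⊆ A := fun b hb => hdc b a (Finset.mem_Iic.mp hb) ha
    have := Finset.card_le_card hsub
    rw [Fin.card_Iic] at this
    omega
  · intro ha
    by_contra h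
    have hsub : A ⊆ Finset.Iio a := by
      intro b hb
      rw [Finset.mem_Iio]
      rcases lt_or_ge b a with h1 | h1
      · exact h1
      · exact absurd (hdc a b h1 hb) h
    have := Finset.card_le_card hsub
    rw [Fin.card_Iio] at this
    omega

theorem stmt_12 (n m : ℕ) (p k : Fin n → ℝ) (v : ℝ)
    (hp : ∀ i, 0 ≤ p i) (hpsum : ∑ i, p i ≤ 1) (hk : ∀ i, 0 < k i) (hv : 0 ≤ v)
    (cls : Fin n → Fin m)
    (hcls : ∀ i j, cls i = cls j → p i = p j ∧ k i = k j)
    (horder : ∀ i j : Fin n, cls i ≤ cls j → p i * k j ≥ p j * k i)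
    (π₀ : Equiv.Perm (Fin n))
    (hπ₀ : ∀ a b : Fin n, a ≤ b → cls (π₀ a) ≤ cls (π₀ b)) :
    ∃ t ≤ m, ∃ B : ℕ,
      B = (∑ c ∈ Finset.univ.filter (fun c : Fin m => c.val < t),
        (Finset.univ.filter (fun i : Fin n => cls i = c)).card) ∧
      B ≤ n ∧
      (∀ (π : Equiv.Perm (Fin n)) (B' : ℕ), B' ≤ n →
        U n p k v π B' ≤ U n p k v π₀ B) := by
  classical
  -- the finite set of achievable utilities
  set Vs : Finset ℝ := ((Finset.univ : Finset (Equiv.Perm (Fin n) × Fin (n + 1))).image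
      (fun q => U n p k v q.1 q.2.val)) with hVs
  have hVne : Vs.Nonempty :=
    ⟨U n p k v 1 (0 : Fin (n + 1)).val, Finset.mem_image.mpr ⟨(1, 0), Finset.mem_univ _, rfl⟩⟩
  set M := Vs.max' hVne with hM
  have hle : ∀ (π : Equiv.Perm (Fin n)) (B : ℕ), B ≤ n → U n p k v π B ≤ M := by
    intro π B hB
    apply Finset.le_max'
    refine Finset.mem_image.mpr ⟨(π, ⟨B, by omega⟩), Finset.mem_univ _, rfl⟩
  have hleL : ∀ l : List (Fin n), l.Nodup → uL p k v 0 l ≤ M := by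
    intro l hl
    obtain ⟨π, hπ⟩ := realize n l hl
    have hlen : l.length ≤ n := by
      have := hl.length_le_card
      simpa using this
    have hb := U_bridge n p k v π l.length hlen
    rw [hπ] at hb
    rw [← hb]
    exact hle π l.length hlen
  -- budgets at which M is achieved
  set Bs : Finset ℕ := (Finset.range (n + 1)).filter
      (fun B => ∃ π : Equiv.Perm (Fin n), U n p k v π B = M) with hBs
  have hBsne : Bs.Nonempty := by
    obtain ⟨q, _, hq⟩ := Finset.mem_image.mp (Vs.max'_mem hVne)
    exact ⟨q.2.val, Finset.mem_filter.mpr ⟨Finset.mem_range.mpr q.2.isLt, ⟨q.1, hq⟩⟩⟩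
  set Bst := Bs.min' hBsne with hBstdef
  have hBstmem : Bst ∈ Bs := Bs.min'_mem hBsne
  obtain ⟨hr, πs, hπs⟩ := Finset.mem_filter.mp hBstmem
  have hBstrange := Finset.mem_range.mp hr
  have hBstn : Bst ≤ n := by omega
  have hBstmin : ∀ B, B ≤ n → (∃ π : Equiv.Perm (Fin n), U n p k v π B = M) → Bst ≤ B := by
    intro B hB hex
    exact Finset.min'_le _ _ (Finset.mem_filter.mpr ⟨Finset.mem_range.mpr (by omega), hex⟩)
  -- the sorted optimal prefix list
  set ls := (plist n πs).take Bst with hls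
  have hlsnd : ls.Nodup := (List.take_sublist _ _).nodup (plist_nodup n πs)
  have hlslen : ls.length = Bst := by
    rw [hls, List.length_take, plist_length]
    omega
  have hlsM : uL p k v 0 ls = M := by
    rw [← U_bridge n p k v πs Bst hBstn, hπs]
  -- the sorting key
  set w : Fin n → ℕ := fun j => (π₀.symm j).val with hw
  have Hw : ∀ x y : Fin n, w x ≤ w y → p y * k x ≤ p x * k y := by
    intro x y hxy
    have hcl : cls x ≤ cls y := by
      have := hπ₀ (π₀.symm x) (π₀.symm y) (by rwa [Fin.le_def])
      simpa using this
    exact horder x y hcl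
  obtain ⟨l', hperm, hsort, hsle⟩ := uL_sort p k v w Hw ls 0
  have hnd' : l'.Nodup := (hperm.nodup_iff).mpr hlsnd
  have hlen' : l'.length = Bst := by rw [hperm.length_eq, hlslen]
  have hl'M : uL p k v 0 l' = M := le_antisymm (hleL l' hnd') (by rw [← hlsM]; exact hsle)
  rcases Nat.eq_zero_or_pos Bst with h0 | hpos
  · -- degenerate case: empty prefix is optimal
    refine ⟨0, by omega, 0, by simp, by omega, ?_⟩
    intro π B' hB'
    have hM0 : M = 0 := by
      rw [← hπs, h0, U_zero]
    rw [U_zero]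
    rw [← hM0]
    exact hle π B' hB'
  · -- main case
    have hlne : l' ≠ [] := by
      intro h
      rw [h] at hlen'
      simp at hlen'
      omega
    set li := l'.getLast hlne with hli
    set ld := l'.dropLast with hld
    have hsplit : ld ++ [li] = l' := List.dropLast_append_getLast hlne
    have hldnd : ld.Nodup := (List.dropLast_sublist l').nodup hnd'
    have hldlen : ld.length = Bst - 1 := by
      rw [hld, List.length_dropLast, hlen']
    have huld : uL p k v 0 l' = uL p k v 0 ld
        + (v * p li - k li * (1 - (ld.map p).sum)) := by
      rw [← hsplit, uL_append]
      simp [uL]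
    -- the marginal of the last guess is strictly positive
    have hldleM : uL p k v 0 ld ≤ M := hleL ld hldnd
    have hldneM : uL p k v 0 ld ≠ M := by
      intro he
      obtain ⟨π', hπ'⟩ := realize n ld hldnd
      have hlen2 : ld.length ≤ n := by omega
      have hb := U_bridge n p k v π' ld.length hlen2
      rw [hπ'] at hb
      have : Bst ≤ ld.length := hBstmin ld.length hlen2 ⟨π', by rw [hb, he]⟩
      omega
    have hmarg : 0 < v * p li - k li * (1 - (ld.map p).sum) := by
      have h1 : uL p k v 0 ld < M := lt_of_le_of_ne hldleM hldneM
      rw [huld] at hl'M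
      linarith
    have hld1 : (ld.map p).sum ≤ 1 := listsum_le_one n p hp hpsum ld hldnd
    have hv0 : 0 < v := by
      rcases hv.lt_or_eq with h | h
      · exact h
      · exfalso
        rw [← h] at hmarg
        nlinarith [hk li, hp li]
    -- everything outside l' has strictly smaller bang-for-buck than li
    have hsums : (l'.map p).sum = (ld.map p).sum + p li := by
      rw [← hsplit]
      simp
    have hl'1 : (l'.map p).sum ≤ 1 := listsum_le_one n p hp hpsum l' hnd'
    have hout : ∀ j : Fin n, j ∉ l' → p j * k li < p li * k j := by
      intro j hj
      have hnd2 : (l' ++ [j]).Nodup := by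
        rw [List.nodup_append]
        refine ⟨hnd', List.nodup_singleton j, fun x hx y hy hxy => ?_⟩
        subst hxy
        rw [List.mem_singleton] at hy
        exact hj (hy ▸ hx)
      have h2 : uL p k v 0 (l' ++ [j]) ≤ M := hleL _ hnd2
      rw [uL_append, hl'M] at h2
      have h3 : v * p j - k j * (1 - (l'.map p).sum) ≤ 0 := by
        simp only [uL, zero_add] at h2
        linarith
      have e1 : v * p j * k li ≤ k j * (1 - (l'.map p).sum) * k li := by
        nlinarith [hk li]
      have e2 : k j * (1 - (l'.map p).sum) * k li ≤ k j * (1 - (ld.map p).sum) * k li := by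
        have hkk : (0:ℝ) ≤ k j * k li * p li :=
          mul_nonneg (mul_nonneg (hk j).le (hk li).le) (hp li)
        rw [hsums]
        nlinarith [hkk]
      have e3 : k j * (1 - (ld.map p).sum) * k li < k j * (v * p li) := by
        nlinarith [hk j]
      have e4 : v * (p j * k li) < v * (p li * k j) := by nlinarith
      exact lt_of_mul_lt_mul_left e4 hv0.le
    -- everything inside l' has w-value (hence class) at most that of li
    have hin : ∀ x ∈ l', w x ≤ w li := by
      intro x hx
      rw [← hsplit] at hx
      have hpw : List.Pairwise (fun a b => w a ≤ w b) (ld ++ [li]) := by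
        rw [hsplit]; exact hsort
      rcases List.mem_append.mp hx with h | h
      · exact (List.pairwise_append.mp hpw).2.2 x h li (List.mem_singleton_self li)
      · rw [List.mem_singleton.mp h]
    have hincls : ∀ x ∈ l', cls x ≤ cls li := by
      intro x hx
      have := hπ₀ (π₀.symm x) (π₀.symm li) (by rw [Fin.le_def]; exact hin x hx)
      simpa using this
    set t : ℕ := (cls li).val + 1 with ht
    have htm : t ≤ m := by
      have := (cls li).isLt
      omega
    -- membership characterization of l'
    have hmemiff : ∀ j : Fin n, j ∈ l' ↔ (cls j).val < t := by
      intro j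
      constructor
      · intro hj
        have := hincls j hj
        rw [Fin.le_def] at this
        omega
      · intro hj
        by_contra hjn
        have h1 := hout j hjn
        have h2 : cls j ≤ cls li := by rw [Fin.le_def]; omega
        have := horder j li h2
        linarith
    -- the class-counting set
    set Sf : Finset (Fin n) := Finset.univ.filter (fun j => (cls j).val < t) with hSf
    have hSfl' : Sf = l'.toFinset := by
      ext j
      rw [hSf, Finset.mem_filter, List.mem_toFinset, hmemiff j]
      simp
    have hSfcard : Sf.card = Bst := by
      rw [hSfl', List.toFinset_card_of_nodup hnd', hlen']
    have hsumeq : Sf.card = ∑ c ∈ Finset.univ.filter (fun c : Fin m => c.val < t),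
        (Finset.univ.filter (fun i : Fin n => cls i = c)).card := by
      have hbi : Sf = (Finset.univ.filter (fun c : Fin m => c.val < t)).biUnion
          (fun c => Finset.univ.filter (fun i : Fin n => cls i = c)) := by
        ext j
        simp only [hSf, Finset.mem_filter, Finset.mem_biUnion, Finset.mem_univ, true_and]
        constructor
        · intro h
          exact ⟨cls j, h, rfl⟩
        · rintro ⟨c, hc, rfl⟩
          exact hc
      rw [hbi]
      apply Finset.card_biUnion
      intro c _ c' _ hcc
      simp only [Finset.disjoint_left, Finset.mem_filter, Finset.mem_univ, true_and]
      rintro a rfl h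
      exact hcc h
    -- the index lower set in π₀-order
    set A : Finset (Fin n) := Finset.univ.filter (fun a => (cls (π₀ a)).val < t) with hA
    have hAcard : A.card = Bst := by
      rw [← hSfcard]
      apply Finset.card_bij (fun a _ => π₀ a)
      · intro a ha
        rw [hA, Finset.mem_filter] at ha
        rw [hSf, Finset.mem_filter]
        exact ⟨Finset.mem_univ _, ha.2⟩
      · intro a _ b _ h
        exact π₀.injective h
      · intro j hj
        rw [hSf, Finset.mem_filter] at hj
        refine ⟨π₀.symm j, ?_, by simp⟩
        rw [hA, Finset.mem_filter]
        simpa using hj.2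
    have hdc : ∀ a b : Fin n, a ≤ b → b ∈ A → a ∈ A := by
      intro a b hab hb
      rw [hA, Finset.mem_filter] at hb ⊢
      have := hπ₀ a b hab
      rw [Fin.le_def] at this
      exact ⟨Finset.mem_univ _, by omega⟩
    have hAiff : ∀ a : Fin n, a ∈ A ↔ a.val < Bst := by
      intro a
      rw [lowerset_iff n A hdc a, hAcard]
    -- the π₀-prefix of length Bst
    set l₀ := (plist n π₀).take Bst with hl₀
    have hl₀nd : l₀.Nodup := (List.take_sublist _ _).nodup (plist_nodup n π₀)
    have hmem₀ : ∀ j : Fin n, j ∈ l₀ ↔ (π₀.symm j).val < Bst := by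
      intro j
      constructor
      · intro hj
        obtain ⟨idx, hidx, hEq⟩ := List.mem_iff_getElem.mp hj
        have hidx2 : idx < Bst := by
          have := hidx
          rw [List.length_take, plist_length] at this
          omega
        have hidxn : idx < n := by omega
        have : (plist n π₀)[idx]'(by rw [plist_length]; omega) = j := by
          rw [← hEq, List.getElem_take]
        simp only [plist] at this
        simp only [List.getElem_map, List.getElem_finRange] at this
        have : π₀.symm j = ⟨idx, hidxn⟩ := by
          rw [← this]
          simp [Fin.ext_iff]
        rw [this]
        exact hidx2
      · intro hj
        apply List.mem_iff_getElem.mpr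
        refine ⟨(π₀.symm j).val, ?_, ?_⟩
        · rw [List.length_take, plist_length]
          exact lt_min hj (π₀.symm j).isLt
        · rw [List.getElem_take]
          simp only [plist, List.getElem_map, List.getElem_finRange]
          rw [show (Fin.cast (List.length_finRange (n := n)) ⟨(π₀.symm j).val, _⟩) = π₀.symm j from
            Fin.ext rfl]
          simp
    have hmemiff₀ : ∀ j : Fin n, j ∈ l₀ ↔ j ∈ l' := by
      intro j
      rw [hmem₀ j, hmemiff j]
      have := hAiff (π₀.symm j)
      rw [hA, Finset.mem_filter] at this
      simp only [Finset.mem_univ, true_and, Equiv.apply_symm_apply] at this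
      rw [← this]
    have hperm₀ : l'.Perm l₀ := by
      apply List.perm_of_nodup_nodup_toFinset_eq hnd' hl₀nd
      ext j
      rw [List.mem_toFinset, List.mem_toFinset, hmemiff₀ j]
    have hsort₀ : l₀.Pairwise (fun a b => w a ≤ w b) := by
      apply List.Pairwise.sublist (List.take_sublist _ _)
      rw [plist, List.pairwise_map]
      apply List.Pairwise.imp ?_ (List.pairwise_lt_finRange n)
      intro a b hab
      have : w (π₀ a) = a.val := by simp [hw]
      have hb : w (π₀ b) = b.val := by simp [hw]
      rw [this, hb]
      exact le_of_lt hab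
    have heq : l' = l₀ := by
      haveI : IsAntisymm (Fin n) (fun a b => w a ≤ w b) := by
        constructor
        intro a b h1 h2
        have : π₀.symm a = π₀.symm b := Fin.ext (le_antisymm h1 h2)
        exact π₀.symm.injective this
      exact List.Perm.eq_of_pairwise' hsort hsort₀ hperm₀
    have hfinal : U n p k v π₀ Bst = M := by
      rw [U_bridge n p k v π₀ Bst hBstn, ← hl₀, ← heq, hl'M]
    refine ⟨t, htm, Bst, ?_, hBstn, ?_⟩
    · rw [← hsumeq, hSfcard]
    · intro π B' hB'
      rw [hfinal]
      exact hle π B' hB'
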